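/- Fix positive integers k and t with k ≥ 2t+1. For every ε > 0 there exist constants C > 0, δ > 0 and n₀ such that for all n > n₀ and every integer ℓ with C·n^{k-t-1} ≤ ℓ ≤ δ·n^{k-t}, one has ρ_{n,k,t}(ℓ) ≤ (1+ε) · (ℓ²/n^t) · (t!/2) · C(k-t-1,t)². -/

import Mathlib

/-- The number of unordered pairs of distinct sets `F₁, F₂ ∈ F` with `|F₁ ∩ F₂| = t`. -/
def rhoPairs (t : ℕ) (F : Finset (Finset ℕ)) : ℕ :=
  ((F.powersetCard 2).filter
    (fun P => ∃ A ∈ P, ∃ B ∈ P, A ≠ B ∧ (A ∩ B).card = t)).card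

/-- `ρ_{n,k,t}(ℓ)`: the minimum of `ρ(F)` over families `F` of `k`-element subsets
of `[n]` with `|F| = ℓ`. -/
noncomputable def rhoMin (n k t ℓ : ℕ) : ℕ :=
  sInf { m : ℕ | ∃ F : Finset (Finset ℕ),
    F ⊆ (Finset.Icc 1 n).powersetCard k ∧ F.card = ℓ ∧ rhoPairs t F = m }


namespace RhoAux
open Finset

def Dblk (t i : ℕ) : Finset ℕ := Finset.Icc (i*(t+1)+1) ((i+1)*(t+1))

lemma Dblk_card (t i : ℕ) : (Dblk t i).card = t + 1 := by
  have h : (i+1)*(t+1) = i*(t+1) + (t+1) := by ring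
  simp only [Dblk, Nat.card_Icc]
  omega

lemma mem_Dblk {t i x : ℕ} : x ∈ Dblk t i ↔ i*(t+1)+1 ≤ x ∧ x ≤ (i+1)*(t+1) := by
  simp [Dblk]

lemma Dblk_disj {t i j : ℕ} (hij : i ≠ j) : Disjoint (Dblk t i) (Dblk t j) := by
  rw [Finset.disjoint_left]
  intro x hx hx'
  rw [mem_Dblk] at hx hx'
  rcases Nat.lt_or_ge i j with h | h
  · have h1 : (i+1)*(t+1) ≤ j*(t+1) := Nat.mul_le_mul_right _ h
    omega
  · have hji : j < i := by omega
    have h1 : (j+1)*(t+1) ≤ i*(t+1) := Nat.mul_le_mul_right _ hji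
    omega

def grnd (n q t : ℕ) : Finset ℕ := Finset.Icc (q*(t+1)+1) n

lemma grnd_card (n q t : ℕ) : (grnd n q t).card = n - q*(t+1) := by
  simp [grnd, Nat.card_Icc]

lemma Dblk_grnd_disj {n q t i : ℕ} (h : i < q) : Disjoint (Dblk t i) (grnd n q t) := by
  rw [Finset.disjoint_left]
  intro x hx hx'
  rw [mem_Dblk] at hx
  simp only [grnd, Finset.mem_Icc] at hx'
  have h1 : (i+1)*(t+1) ≤ q*(t+1) := Nat.mul_le_mul_right _ h
  omega

def Aset (q t : ℕ) : Finset ℕ := Finset.Icc 1 (q*(t+1))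

lemma Dblk_subset_Aset {q t i : ℕ} (h : i < q) : Dblk t i ⊆ Aset q t := by
  intro x hx
  rw [mem_Dblk] at hx
  have h1 : (i+1)*(t+1) ≤ q*(t+1) := Nat.mul_le_mul_right _ h
  simp only [Aset, Finset.mem_Icc]
  omega

lemma grnd_Aset_disj {n q t : ℕ} : Disjoint (grnd n q t) (Aset q t) := by
  rw [Finset.disjoint_left]
  intro x hx hx'
  simp only [grnd, Finset.mem_Icc] at hx
  simp only [Aset, Finset.mem_Icc] at hx'
  omega

def fam (n q t a s : ℕ) : Finset (Finset ℕ) :=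
  (Finset.range s).biUnion
    (fun i => ((grnd n q t).powersetCard a).image (fun S => Dblk t i ∪ S))

lemma mem_fam {n q t a s : ℕ} {F : Finset ℕ} :
    F ∈ fam n q t a s ↔ ∃ i < s, ∃ S, S ⊆ grnd n q t ∧ S.card = a ∧ F = Dblk t i ∪ S := by
  simp only [fam, mem_biUnion, mem_image, mem_powersetCard, mem_range]
  constructor
  · rintro ⟨i, hi, S, ⟨hS1, hS2⟩, rfl⟩
    exact ⟨i, hi, S, hS1, hS2, rfl⟩
  · rintro ⟨i, hi, S, hS1, hS2, rfl⟩
    exact ⟨i, hi, S, ⟨hS1, hS2⟩, rfl⟩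

lemma union_inter_grnd {n q t i : ℕ} (hiq : i < q) {S : Finset ℕ} (hS : S ⊆ grnd n q t) :
    (Dblk t i ∪ S) ∩ grnd n q t = S := by
  rw [union_inter_distrib_right,
    Finset.disjoint_iff_inter_eq_empty.mp (Dblk_grnd_disj hiq),
    inter_eq_left.mpr hS, empty_union]

lemma union_inter_Aset {n q t i : ℕ} (hiq : i < q) {S : Finset ℕ} (hS : S ⊆ grnd n q t) :
    (Dblk t i ∪ S) ∩ Aset q t = Dblk t i := by
  rw [union_inter_distrib_right, inter_eq_left.mpr (Dblk_subset_Aset hiq),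
    Finset.disjoint_iff_inter_eq_empty.mp ((grnd_Aset_disj (n := n)).mono_left hS),
    union_empty]

lemma fam_card {n q t a s : ℕ} (hsq : s ≤ q) :
    (fam n q t a s).card = s * (n - q*(t+1)).choose a := by
  rw [fam, card_biUnion]
  · have hc : ∀ i ∈ Finset.range s,
        (((grnd n q t).powersetCard a).image (fun S => Dblk t i ∪ S)).card
          = (n - q*(t+1)).choose a := by
      intro i hi
      rw [mem_range] at hi
      rw [card_image_of_injOn, card_powersetCard, grnd_card]
      intro S hS S' hS' hSS
      rw [mem_coe, mem_powersetCard] at hS hS'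
      have := congrArg (· ∩ grnd n q t) hSS
      simpa [union_inter_grnd (lt_of_lt_of_le hi hsq) hS.1,
        union_inter_grnd (lt_of_lt_of_le hi hsq) hS'.1] using this
    rw [Finset.sum_congr rfl hc, Finset.sum_const, card_range, smul_eq_mul]
  · intro i hi j hj hij
    rw [mem_coe, mem_range] at hi hj
    rw [Function.onFun, Finset.disjoint_left]
    intro F hF hF'
    simp only [mem_image, mem_powersetCard] at hF hF'
    obtain ⟨S, ⟨hS, _⟩, rfl⟩ := hF
    obtain ⟨S', ⟨hS', _⟩, hEq⟩ := hF'
    have h1 := congrArg (· ∩ Aset q t) hEq.symm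
    simp only [union_inter_Aset (lt_of_lt_of_le hj hsq) hS',
      union_inter_Aset (lt_of_lt_of_le hi hsq) hS] at h1
    have hmem : i*(t+1)+1 ∈ Dblk t i := by
      simp only [Dblk, Finset.mem_Icc]
      constructor
      · exact le_rfl
      · have : (i+1)*(t+1) = i*(t+1)+(t+1) := by ring
        omega
    exact Finset.disjoint_left.mp (Dblk_disj hij) hmem (h1 ▸ hmem)

lemma fam_subset {n q t a s k : ℕ} (hsq : s ≤ q) (hq : q*(t+1) ≤ n) (hk : k = t+1+a) :
    fam n q t a s ⊆ (Finset.Icc 1 n).powersetCard k := by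
  intro F hF
  rw [mem_fam] at hF
  obtain ⟨i, hi, S, hS, hSc, rfl⟩ := hF
  rw [mem_powersetCard]
  constructor
  · apply union_subset
    · refine (Dblk_subset_Aset (lt_of_lt_of_le hi hsq)).trans ?_
      intro x hx
      simp only [Aset, Finset.mem_Icc] at hx
      simp only [Finset.mem_Icc]
      omega
    · refine hS.trans ?_
      intro x hx
      simp only [grnd, Finset.mem_Icc] at hx
      simp only [Finset.mem_Icc]
      omega
  · rw [card_union_of_disjoint ((Dblk_grnd_disj (lt_of_lt_of_le hi hsq)).mono_right hS),
      Dblk_card, hSc, hk]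

lemma inter_fam {n q t i j : ℕ} (hij : i ≠ j) (hi : i < q) (hj : j < q)
    {S1 S2 : Finset ℕ} (hS1 : S1 ⊆ grnd n q t) (hS2 : S2 ⊆ grnd n q t) :
    (Dblk t i ∪ S1) ∩ (Dblk t j ∪ S2) = S1 ∩ S2 := by
  ext x
  simp only [mem_inter, mem_union]
  constructor
  · rintro ⟨h1 | h1, h2 | h2⟩
    · exact absurd h2 (Finset.disjoint_left.mp (Dblk_disj hij) h1)
    · exact absurd (hS2 h2) (Finset.disjoint_left.mp (Dblk_grnd_disj hi) h1)
    · exact absurd (hS1 h1) (Finset.disjoint_left.mp (Dblk_grnd_disj hj) h2)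
    · exact ⟨h1, h2⟩
  · rintro ⟨h1, h2⟩
    exact ⟨Or.inr h1, Or.inr h2⟩

lemma pervertex {n q t a s : ℕ} (hsq : s ≤ q) (hta : t ≤ a) {F1 : Finset ℕ}
    (hF1 : F1 ∈ fam n q t a s) :
    (((fam n q t a s)).filter (fun F2 => F1 ≠ F2 ∧ (F1 ∩ F2).card = t)).card
      ≤ s * (a.choose t * (n - q*(t+1)).choose (a - t)) := by
  obtain ⟨i, hi, S1, hS1, hS1c, rfl⟩ := mem_fam.mp hF1
  have key : ∀ F2 ∈ ((fam n q t a s)).filter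
      (fun F2 => Dblk t i ∪ S1 ≠ F2 ∧ ((Dblk t i ∪ S1) ∩ F2).card = t),
      (F2 ∩ Aset q t) ∈ (Finset.range s).image (Dblk t) ∧
      (S1 ∩ (F2 ∩ grnd n q t)) ∈ S1.powersetCard t ∧
      ((F2 ∩ grnd n q t) \ S1) ∈ (grnd n q t).powersetCard (a - t) := by
    intro F2 hF2
    rw [mem_filter] at hF2
    obtain ⟨hmem, hne, hcard⟩ := hF2
    obtain ⟨j, hj, S2, hS2, hS2c, rfl⟩ := mem_fam.mp hmem
    have hij : i ≠ j := by
      rintro rfl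
      have hsub : Dblk t i ⊆ (Dblk t i ∪ S1) ∩ (Dblk t i ∪ S2) :=
        subset_inter subset_union_left subset_union_left
      have h5 : (Dblk t i).card ≤ ((Dblk t i ∪ S1) ∩ (Dblk t i ∪ S2)).card :=
        card_le_card hsub
      rw [Dblk_card t i, hcard] at h5
      omega
    rw [inter_fam hij (lt_of_lt_of_le hi hsq) (lt_of_lt_of_le hj hsq) hS1 hS2] at hcard
    rw [union_inter_Aset (lt_of_lt_of_le hj hsq) hS2, union_inter_grnd (lt_of_lt_of_le hj hsq) hS2]
    refine ⟨mem_image_of_mem _ (mem_range.mpr hj), ?_, ?_⟩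
    · rw [mem_powersetCard]
      exact ⟨inter_subset_left, hcard⟩
    · rw [mem_powersetCard]
      refine ⟨(sdiff_subset).trans hS2, ?_⟩
      have h1 : (S2 \ S1).card + (S2 ∩ S1).card = S2.card := card_sdiff_add_card_inter S2 S1
      have hc2 : (S2 ∩ S1).card = t := by rw [inter_comm]; exact hcard
      omega
  calc (((fam n q t a s)).filter
      (fun F2 => Dblk t i ∪ S1 ≠ F2 ∧ ((Dblk t i ∪ S1) ∩ F2).card = t)).card
      ≤ (((Finset.range s).image (Dblk t)) ×ˢ
          (S1.powersetCard t ×ˢ (grnd n q t).powersetCard (a - t))).card := by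
        apply card_le_card_of_injOn
          (fun F2 => (F2 ∩ Aset q t, (S1 ∩ (F2 ∩ grnd n q t), (F2 ∩ grnd n q t) \ S1)))
        · intro F2 hF2
          obtain ⟨h1, h2, h3⟩ := key F2 hF2
          simp only [mem_coe, mem_product]
          exact ⟨h1, h2, h3⟩
        · intro F2 hF2 F2' hF2' hEq
          simp only [mem_coe, mem_filter] at hF2 hF2'
          simp only [Prod.mk.injEq] at hEq
          obtain ⟨e1, e2, e3⟩ := hEq
          have hG : F2 ∩ grnd n q t = F2' ∩ grnd n q t := by
            have h4 : ∀ X : Finset ℕ, (S1 ∩ X) ∪ (X \ S1) = X := by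
              intro X
              ext y
              simp only [mem_union, mem_inter, mem_sdiff]
              tauto
            rw [← h4 (F2 ∩ grnd n q t), ← h4 (F2' ∩ grnd n q t), e2, e3]
          have hsplit : ∀ F ∈ fam n q t a s, (F ∩ Aset q t) ∪ (F ∩ grnd n q t) = F := by
            intro F hF
            obtain ⟨j, hj, S, hS, hSc, rfl⟩ := mem_fam.mp hF
            rw [union_inter_Aset (lt_of_lt_of_le hj hsq) hS,
              union_inter_grnd (lt_of_lt_of_le hj hsq) hS]
          rw [← hsplit F2 hF2.1, ← hsplit F2' hF2'.1, e1, hG]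
  _ ≤ s * (a.choose t * (n - q*(t+1)).choose (a - t)) := by
      rw [card_product, card_product, card_powersetCard, card_powersetCard, hS1c, grnd_card]
      exact Nat.mul_le_mul_right _ ((card_image_le).trans_eq (card_range s))

lemma two_rho_le (t : ℕ) (F : Finset (Finset ℕ)) (B : ℕ)
    (hB : ∀ A ∈ F, ((F.filter (fun B' => A ≠ B' ∧ (A ∩ B').card = t)).card ≤ B)) :
    2 * rhoPairs t F ≤ F.card * B := by
  classical
  set Pairs := (F ×ˢ F).filter (fun p => p.1 ≠ p.2 ∧ (p.1 ∩ p.2).card = t) with hPairs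
  have step1 : 2 * rhoPairs t F ≤ Pairs.card := by
    apply mul_card_image_le_card_of_maps_to
      (f := fun p : Finset ℕ × Finset ℕ => ({p.1, p.2} : Finset (Finset ℕ)))
      (t := (F.powersetCard 2).filter
        (fun P => ∃ A ∈ P, ∃ B ∈ P, A ≠ B ∧ (A ∩ B).card = t))
    · intro p hp
      simp only [hPairs, mem_filter, mem_product] at hp
      obtain ⟨⟨h1, h2⟩, h3, h4⟩ := hp
      rw [mem_filter, mem_powersetCard]
      refine ⟨⟨?_, card_pair h3⟩, p.1, mem_insert_self _ _, p.2,
        mem_insert_of_mem (mem_singleton_self _), h3, h4⟩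
      intro X hX
      rcases mem_insert.mp hX with rfl | hX
      · exact h1
      · rw [mem_singleton] at hX; subst hX; exact h2
    · intro P hP
      rw [mem_filter, mem_powersetCard] at hP
      obtain ⟨⟨hPF, hP2⟩, A, hA, B', hB', hAB, hABt⟩ := hP
      have hPeq : P = {A, B'} := by
        have hsubP : ({A, B'} : Finset (Finset ℕ)) ⊆ P := by
          intro X hX
          rcases mem_insert.mp hX with rfl | hX
          · exact hA
          · rw [mem_singleton] at hX; subst hX; exact hB'
        exact (eq_of_subset_of_card_le hsubP (by rw [hP2, card_pair hAB])).symm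
      have hmem1 : (A, B') ∈ Pairs := by
        simp only [hPairs, mem_filter, mem_product]
        exact ⟨⟨hPF hA, hPF hB'⟩, hAB, hABt⟩
      have hmem2 : (B', A) ∈ Pairs := by
        simp only [hPairs, mem_filter, mem_product]
        exact ⟨⟨hPF hB', hPF hA⟩, hAB.symm, by rwa [inter_comm]⟩
      have hsub : ({(A, B'), (B', A)} : Finset (Finset ℕ × Finset ℕ)) ⊆
          Pairs.filter (fun p => ({p.1, p.2} : Finset (Finset ℕ)) = P) := by
        intro p hp
        rcases mem_insert.mp hp with rfl | hp
        · exact mem_filter.mpr ⟨hmem1, by rw [hPeq]⟩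
        · rw [mem_singleton] at hp; subst hp
          exact mem_filter.mpr ⟨hmem2, by rw [hPeq, pair_comm]⟩
      have hc2 : ({(A, B'), (B', A)} : Finset (Finset ℕ × Finset ℕ)).card = 2 :=
        card_pair (by simp [hAB])
      calc 2 = ({(A, B'), (B', A)} : Finset (Finset ℕ × Finset ℕ)).card := hc2.symm
        _ ≤ _ := card_le_card hsub
  have step2 : Pairs.card ≤ F.card * B := by
    have hfib : Pairs.card = ∑ A ∈ F, (Pairs.filter (fun p => p.1 = A)).card := by
      apply card_eq_sum_card_fiberwise
      intro p hp
      simp only [hPairs, mem_coe, mem_filter, mem_product] at hp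
      exact hp.1.1
    rw [hfib]
    calc ∑ A ∈ F, (Pairs.filter (fun p => p.1 = A)).card
        ≤ ∑ A ∈ F, B := by
          apply Finset.sum_le_sum
          intro A hA
          refine le_trans ?_ (hB A hA)
          apply card_le_card_of_injOn Prod.snd
          · intro p hp
            simp only [hPairs, mem_coe, mem_filter, mem_product] at hp
            obtain ⟨⟨⟨h1, h2⟩, h3, h4⟩, h5⟩ := hp
            subst h5
            exact mem_filter.mpr ⟨h2, h3, h4⟩
          · intro p hp p' hp' hpp
            simp only [mem_coe, mem_filter] at hp hp'
            exact Prod.ext (hp.2.trans hp'.2.symm) hpp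
      _ = F.card * B := by rw [Finset.sum_const, smul_eq_mul]
  exact step1.trans step2

lemma rhoMin_bound {n k q t a s ℓ : ℕ} (hk : k = t+1+a) (hta : t ≤ a) (hsq : s ≤ q)
    (hq : q*(t+1) ≤ n) (hℓ : ℓ ≤ s * (n - q*(t+1)).choose a) :
    2 * rhoMin n k t ℓ ≤ ℓ * (s * (a.choose t * (n - q*(t+1)).choose (a - t))) := by
  classical
  obtain ⟨F, hFsub, hFcard⟩ := exists_subset_card_eq (by rw [fam_card hsq]; exact hℓ :
    ℓ ≤ (fam n q t a s).card)
  have h1 : rhoMin n k t ℓ ≤ rhoPairs t F :=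
    Nat.sInf_le ⟨F, hFsub.trans (fam_subset hsq hq hk), hFcard, rfl⟩
  have h2 : 2 * rhoPairs t F ≤ ℓ * (s * (a.choose t * (n - q*(t+1)).choose (a - t))) := by
    rw [← hFcard]
    apply two_rho_le
    intro A hA
    calc (F.filter (fun B' => A ≠ B' ∧ (A ∩ B').card = t)).card
        ≤ (((fam n q t a s)).filter (fun F2 => A ≠ F2 ∧ (A ∩ F2).card = t)).card :=
          card_le_card (filter_subset_filter _ hFsub)
      _ ≤ _ := pervertex hsq hta (hFsub hA)
  omega

lemma pow_one_add_le' {M : ℕ} {x : ℝ} (hx0 : 0 ≤ x) (hx1 : x ≤ 1) :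
    (1 + x) ^ M ≤ 1 + (2 ^ M - 1) * x := by
  induction M with
  | zero => simp
  | succ M ih =>
    have h2M : (1:ℝ) ≤ 2 ^ M := one_le_pow₀ (by norm_num)
    have hx2 : x ^ 2 ≤ x := by nlinarith
    calc (1 + x) ^ (M + 1) = (1 + x) ^ M * (1 + x) := by ring
      _ ≤ (1 + (2 ^ M - 1) * x) * (1 + x) := by nlinarith
      _ = 1 + 2 ^ M * x + (2 ^ M - 1) * x ^ 2 := by ring
      _ ≤ 1 + (2 ^ (M + 1) - 1) * x := by
          have h2 : (2:ℝ) ^ (M+1) = 2 * 2 ^ M := by ring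
          nlinarith

lemma pow_one_add_le {M : ℕ} {x : ℝ} (hx0 : 0 ≤ x) (hx1 : x ≤ 1) :
    (1 + x) ^ M ≤ 1 + 2 ^ M * x := by
  have h := pow_one_add_le' (M := M) hx0 hx1
  nlinarith

lemma Nlow {n m a : ℕ} (hm : n + 2 * a ≤ 2 * (m + 1)) :
    n ^ a ≤ 2 ^ a * (a.factorial * m.choose a) := by
  calc n ^ a ≤ (2 * (m + 1 - a)) ^ a := Nat.pow_le_pow_left (by omega) a
    _ = 2 ^ a * (m + 1 - a) ^ a := by rw [Nat.mul_pow]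
    _ ≤ 2 ^ a * m.descFactorial a :=
        Nat.mul_le_mul_left _ (Nat.pow_sub_le_descFactorial m a)
    _ = 2 ^ a * (a.factorial * m.choose a) := by rw [Nat.descFactorial_eq_factorial_mul_choose]

lemma keyfac {m a t : ℕ} (hta : t ≤ a) (ham : a ≤ m) :
    (m + 1 - t) ^ t * (m - t + 1 - (a - t)) ^ (a - t)
      ≤ (t.factorial * (a - t).factorial) * (m.choose a * a.choose t) := by
  have h1 : m.choose a * a.choose t = m.choose t * (m - t).choose (a - t) :=
    Nat.choose_mul hta
  calc (m + 1 - t) ^ t * (m - t + 1 - (a - t)) ^ (a - t)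
      ≤ m.descFactorial t * (m - t).descFactorial (a - t) :=
        Nat.mul_le_mul (Nat.pow_sub_le_descFactorial m t) (Nat.pow_sub_le_descFactorial _ _)
    _ = (t.factorial * m.choose t) * ((a - t).factorial * (m - t).choose (a - t)) := by
        rw [Nat.descFactorial_eq_factorial_mul_choose, Nat.descFactorial_eq_factorial_mul_choose]
    _ = (t.factorial * (a - t).factorial) * (m.choose a * a.choose t) := by
        rw [h1]; ring

lemma mCb_le {n m b : ℕ} (hmn : m ≤ n) : b.factorial * m.choose b ≤ n ^ b := by
  calc b.factorial * m.choose b = m.descFactorial b := by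
        rw [Nat.descFactorial_eq_factorial_mul_choose]
    _ ≤ m ^ b := Nat.descFactorial_le_pow m b
    _ ≤ n ^ b := Nat.pow_le_pow_left hmn b

end RhoAux

set_option maxHeartbeats 2000000 in
/-- Explicit-construction upper bound with constant `C(k-t-1,t)²` (Claim 3). -/
theorem rho_upper_construction (k t : ℕ) (ht : 0 < t) (h : 2 * t + 1 ≤ k) :
    ∀ ε : ℝ, 0 < ε → ∃ C δ : ℝ, 0 < C ∧ 0 < δ ∧ ∃ n₀ : ℕ, ∀ n > n₀, ∀ ℓ : ℕ,
      C * (n : ℝ) ^ (k - t - 1) ≤ (ℓ : ℝ) → (ℓ : ℝ) ≤ δ * (n : ℝ) ^ (k - t) →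
      (rhoMin n k t ℓ : ℝ) ≤
        (1 + ε) * ((ℓ : ℝ) ^ 2 / (n : ℝ) ^ t) * ((t.factorial : ℝ) / 2)
          * (((k - t - 1).choose t : ℝ)) ^ 2 := by
  intro ε hε
  set a := k - t - 1 with ha
  set b := a - t with hb
  have hka : k = t + 1 + a := by omega
  have hta : t ≤ a := by omega
  have htb : a = t + b := by omega
  have hexp : k - t = a + 1 := by omega
  have haCtR : (1:ℝ) ≤ (a.choose t : ℝ) := by exact_mod_cast Nat.choose_pos hta
  have htfR : (1:ℝ) ≤ (t.factorial : ℝ) := by exact_mod_cast t.factorial_pos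
  have hbfR : (1:ℝ) ≤ (b.factorial : ℝ) := by exact_mod_cast b.factorial_pos
  -- choice of ε₂
  obtain ⟨ε₂, hε₂pos, hε₂le1, hε₂ε⟩ : ∃ ε₂ : ℝ, 0 < ε₂ ∧ ε₂ ≤ 1 ∧ 2^a * ε₂ ≤ ε / 2 := by
    refine ⟨min 1 (ε / 2^(a+1)), lt_min one_pos (by positivity), min_le_left _ _, ?_⟩
    have h1 : min 1 (ε / 2^(a+1)) ≤ ε / 2^(a+1) := min_le_right _ _
    have h2 : (0:ℝ) < 2^a := by positivity
    calc 2^a * min 1 (ε / 2^(a+1)) ≤ 2^a * (ε / 2^(a+1)) := mul_le_mul_of_nonneg_left h1 h2.le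
      _ = ε / 2 := by
          rw [pow_succ]
          field_simp
  -- choice of r
  obtain ⟨r, hrt, hr8⟩ : ∃ r : ℕ, 8*(t+1) ≤ r ∧ 8*((t:ℝ)+1) ≤ ε₂ * r := by
    refine ⟨max (8*(t+1)) ⌈(8*((t:ℝ)+1))/ε₂⌉₊, le_max_left _ _, ?_⟩
    have h1 : (8*((t:ℝ)+1))/ε₂ ≤ (⌈(8*((t:ℝ)+1))/ε₂⌉₊ : ℝ) := Nat.le_ceil _
    have h2 : ((⌈(8*((t:ℝ)+1))/ε₂⌉₊ : ℕ):ℝ)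
        ≤ ((max (8*(t+1)) ⌈(8*((t:ℝ)+1))/ε₂⌉₊ : ℕ):ℝ) :=
      Nat.cast_le.mpr (le_max_right _ _)
    rw [div_le_iff₀ hε₂pos] at h1
    nlinarith
  have hrpos : 0 < r := by omega
  have hrR : (0:ℝ) < r := by exact_mod_cast hrpos
  refine ⟨1 + 2/(ε * t.factorial * a.choose t), 1/(2^(a+1) * a.factorial * r),
    by positivity, ?_, ?_⟩
  · apply div_pos one_pos
    apply mul_pos (by positivity : (0:ℝ) < 2^(a+1) * a.factorial) hrR
  obtain ⟨n₀, hn₀1, hn₀2⟩ : ∃ n₀ : ℕ, 8*r + 8*(a+t+k+2) ≤ n₀ ∧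
      (8*((t:ℝ)+(b:ℝ)+1))/ε₂ ≤ n₀ := by
    refine ⟨max (8*r + 8*(a+t+k+2)) ⌈(8*((t:ℝ)+(b:ℝ)+1))/ε₂⌉₊, le_max_left _ _, ?_⟩
    calc (8*((t:ℝ)+(b:ℝ)+1))/ε₂ ≤ (⌈(8*((t:ℝ)+(b:ℝ)+1))/ε₂⌉₊:ℝ) := Nat.le_ceil _
      _ ≤ _ := Nat.cast_le.mpr (le_max_right _ _)
  refine ⟨n₀, ?_⟩
  intro n hn ℓ hCl hδl
  rw [hexp] at hδl
  have hn8r : 8*r ≤ n := by omega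
  have hnk : 8*(a+t+k+2) ≤ n := by omega
  have hnR1 : (1:ℝ) ≤ n := by
    have : 1 ≤ n := by omega
    exact_mod_cast this
  have hnε : 8*((t:ℝ)+(b:ℝ)+1) ≤ ε₂ * n := by
    have h2 : (n₀:ℝ) ≤ n := Nat.cast_le.mpr (by omega)
    rw [div_le_iff₀ hε₂pos] at hn₀2
    nlinarith
  -- the construction parameters
  obtain ⟨q, hqdef⟩ : ∃ q, q = n / r := ⟨_, rfl⟩
  obtain ⟨m, hmdef⟩ : ∃ m, m = n - q*(t+1) := ⟨_, rfl⟩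
  obtain ⟨N, hNdef⟩ : ∃ N, N = m.choose a := ⟨_, rfl⟩
  obtain ⟨s, hsdef⟩ : ∃ s, s = ℓ / N + 1 := ⟨_, rfl⟩
  have hq1 : q*(t+1) ≤ n := by
    calc q*(t+1) ≤ q*r := Nat.mul_le_mul_left _ (by omega)
      _ ≤ n := by rw [hqdef]; exact Nat.div_mul_le_self n r
  have hq8 : q*(t+1) ≤ n/8 := by
    have h1 : q ≤ n/(8*(t+1)) := by
      rw [hqdef]
      exact Nat.div_le_div_left hrt (by omega)
    have h2 : n/(8*(t+1)) = n/8/(t+1) := by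
      rw [Nat.div_div_eq_div_mul]
    calc q*(t+1) ≤ (n/8/(t+1))*(t+1) := Nat.mul_le_mul_right _ (h2 ▸ h1)
      _ ≤ n/8 := Nat.div_mul_le_self _ _
  have hP : ∃ P, P = q*(t+1) := ⟨_, rfl⟩
  obtain ⟨P, hPdef⟩ := hP
  have hmP : m = n - P := by rw [hmdef, hPdef]
  have hP8 : P ≤ n/8 := hPdef ▸ hq8
  have hPn : P ≤ n := hPdef ▸ hq1
  have hmlarge : n + 2*a ≤ 2*(m+1) := by omega
  have hNlow : n^a ≤ 2^a * (a.factorial * N) := by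
    rw [hNdef]; exact RhoAux.Nlow hmlarge
  have hN0 : 0 < N := by
    rcases Nat.eq_zero_or_pos N with h0 | hpos
    · exfalso
      rw [h0, Nat.mul_zero, Nat.mul_zero] at hNlow
      have : 0 < n^a := Nat.pow_pos (by omega)
      omega
    · exact hpos
  have ham : a ≤ m := by omega
  have hmn : m ≤ n := by omega
  have hcap : ℓ ≤ s * N := by
    have h2 : ℓ % N < N := Nat.mod_lt ℓ hN0
    calc ℓ = N * (ℓ/N) + ℓ % N := (Nat.div_add_mod ℓ N).symm
      _ ≤ N * (ℓ/N) + N := Nat.add_le_add_left h2.le _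
      _ = s * N := by rw [hsdef]; ring
  -- real versions of basic quantities
  have hNR : (0:ℝ) < N := by exact_mod_cast hN0
  have hNlowR : (n:ℝ)^a ≤ 2^a * (a.factorial * N) := by exact_mod_cast hNlow
  have hafR : (0:ℝ) < a.factorial := by exact_mod_cast a.factorial_pos
  have hδl' : (ℓ:ℝ) * (2^(a+1) * a.factorial * r) ≤ (n:ℝ)^(a+1) := by
    have hpos : (0:ℝ) < 2^(a+1) * a.factorial * r := by
      apply mul_pos (by positivity : (0:ℝ) < 2^(a+1) * a.factorial) hrR
    have := mul_le_mul_of_nonneg_right hδl hpos.le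
    calc (ℓ:ℝ) * (2^(a+1) * a.factorial * r)
        ≤ 1/(2^(a+1) * a.factorial * r) * (n:ℝ)^(a+1) * (2^(a+1) * a.factorial * r) := this
      _ = (n:ℝ)^(a+1) := by field_simp
  -- s ≤ q
  have hqlbN : n < r*q + r := by
    calc n = r*(n/r) + n % r := (Nat.div_add_mod n r).symm
      _ < r*(n/r) + r := Nat.add_lt_add_left (Nat.mod_lt n hrpos) _
      _ = r*q + r := by rw [hqdef]
  have hqlb : (n:ℝ) < r*q + r := by exact_mod_cast hqlbN
  have hsR : (s:ℝ) ≤ (ℓ:ℝ)/(N:ℝ) + 1 := by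
    rw [hsdef]
    push_cast
    exact add_le_add_left (Nat.cast_div_le) 1
  have hlN : (ℓ:ℝ) * (2*r) ≤ (n:ℝ) * N := by
    have hc : (0:ℝ) < 2^a * a.factorial := by positivity
    have h5 : (ℓ:ℝ) * (2*r) * (2^a * a.factorial) ≤ (n:ℝ) * N * (2^a * a.factorial) := by
      have e1 : (ℓ:ℝ) * (2*r) * (2^a * a.factorial) = (ℓ:ℝ) * (2^(a+1) * a.factorial * r) := by
        rw [pow_succ]; ring
      have e2 : (n:ℝ)^(a+1) = (n:ℝ) * (n:ℝ)^a := by rw [pow_succ]; ring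
      have e3 : (n:ℝ) * ((2:ℝ)^a * (a.factorial * N)) = (n:ℝ) * N * (2^a * a.factorial) := by ring
      calc (ℓ:ℝ) * (2*r) * (2^a * a.factorial) = (ℓ:ℝ) * (2^(a+1) * a.factorial * r) := e1
        _ ≤ (n:ℝ)^(a+1) := hδl'
        _ = (n:ℝ) * (n:ℝ)^a := e2
        _ ≤ (n:ℝ) * ((2:ℝ)^a * (a.factorial * N)) := by
            apply mul_le_mul_of_nonneg_left _ (by positivity)
            exact hNlowR
        _ = (n:ℝ) * N * (2^a * a.factorial) := e3
    exact le_of_mul_le_mul_right h5 hc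
  have hsq : s ≤ q := by
    have h6 : (s:ℝ) * (2*r) ≤ (n:ℝ) + 2*r := by
      have h61 : (ℓ:ℝ)/(N:ℝ) * (2*r) ≤ n := by
        rw [div_mul_eq_mul_div, div_le_iff₀ hNR]
        exact hlN
      calc (s:ℝ) * (2*r) ≤ ((ℓ:ℝ)/(N:ℝ) + 1) * (2*r) := by
            apply mul_le_mul_of_nonneg_right hsR (by positivity)
        _ = (ℓ:ℝ)/(N:ℝ) * (2*r) + 2*r := by ring
        _ ≤ (n:ℝ) + 2*r := by linarith
    have h7 : (s:ℝ) * (2*r) < (q:ℝ) * (2*r) := by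
      have hn8rR : 8*(r:ℝ) ≤ n := by exact_mod_cast hn8r
      have hq2 : 2*(n:ℝ) - 2*r < (q:ℝ) * (2*r) := by nlinarith [hqlb]
      linarith
    have h8 : (s:ℝ) < (q:ℝ) := lt_of_mul_lt_mul_right h7 (by positivity)
    exact_mod_cast h8.le
  -- the combinatorial bound
  have hcomb : 2 * rhoMin n k t ℓ ≤ ℓ * (s * (a.choose t * m.choose b)) := by
    rw [hb, hmdef]
    exact RhoAux.rhoMin_bound hka hta hsq hq1 (by rw [← hmdef, ← hNdef]; exact hcap)
  have hcombR : 2 * (rhoMin n k t ℓ : ℝ) ≤ (ℓ:ℝ) * (s * (a.choose t * m.choose b)) := by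
    exact_mod_cast hcomb
  -- real key quantities
  set Mn : ℝ := (m:ℝ) + 1 - t - b with hMndef
  have hmcast : (m:ℝ) = (n:ℝ) - q*(t+1) := by
    rw [hmdef]
    push_cast [Nat.cast_sub hq1]
    ring
  have hmtb : t + b ≤ m := htb ▸ ham
  have hMn1 : 1 ≤ Mn := by
    rw [hMndef]
    have : (t:ℝ) + b ≤ m := by exact_mod_cast hmtb
    linarith
  have hc1 : ((m+1-t : ℕ):ℝ) = (m:ℝ)+1-t := by
    have : t ≤ m + 1 := by omega
    push_cast [Nat.cast_sub this]
    ring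
  have hc2 : ((m-t+1-b : ℕ):ℝ) = Mn := by
    have h1 : t ≤ m := le_trans (by omega) ham
    have h2 : b ≤ m - t + 1 := by omega
    rw [hMndef]
    push_cast [Nat.cast_sub h2, Nat.cast_sub h1]
    ring
  have hkeyN : (m+1-t)^t * (m-t+1-b)^b ≤ (t.factorial * b.factorial) * (N * a.choose t) := by
    have := RhoAux.keyfac hta ham
    rw [← hb, ← hNdef] at this
    exact this
  have hkeyR : ((m:ℝ)+1-t)^t * Mn^b ≤ (t.factorial * b.factorial) * (N * a.choose t) := by
    have := hkeyN
    have hcast : (((m+1-t)^t * (m-t+1-b)^b : ℕ) : ℝ)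
        ≤ (((t.factorial * b.factorial) * (N * a.choose t) : ℕ) : ℝ) := by exact_mod_cast this
    push_cast at hcast
    rw [hc1, hc2] at hcast
    push_cast
    exact hcast
  have hmCbR : (b.factorial:ℝ) * (m.choose b) ≤ (n:ℝ)^b := by
    exact_mod_cast RhoAux.mCb_le hmn
  -- n ≤ (1+ε₂) Mn
  have hqrn : (q:ℝ)*r ≤ n := by
    have : q*r ≤ n := by rw [hqdef]; exact Nat.div_mul_le_self n r
    exact_mod_cast this
  have hqnn : (0:ℝ) ≤ (q:ℝ) := by positivity
  have hqeR : 8*((q:ℝ)*((t:ℝ)+1)) ≤ ε₂ * n := by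
    have h1 : 8*((q:ℝ)*((t:ℝ)+1)) ≤ ε₂ * (q*r) := by nlinarith
    nlinarith
  have hMnn : (n:ℝ) ≤ (1+ε₂) * Mn := by
    rw [hMndef, hmcast]
    push_cast
    nlinarith
  have hpowa : (n:ℝ)^a ≤ (1+ε/2) * Mn^a := by
    have h1 : (n:ℝ)^a ≤ ((1+ε₂)*Mn)^a := by
      apply pow_le_pow_left₀ (by positivity) hMnn
    have h2 : ((1+ε₂)*Mn)^a = (1+ε₂)^a * Mn^a := mul_pow _ _ _
    have h3 : (1+ε₂)^a ≤ 1 + 2^a * ε₂ := RhoAux.pow_one_add_le hε₂pos.le hε₂le1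
    have h4 : (0:ℝ) ≤ Mn^a := by positivity
    have h5 : (1+ε₂)^a * Mn^a ≤ (1 + 2^a*ε₂) * Mn^a := mul_le_mul_of_nonneg_right h3 h4
    have h6 : (1 + 2^a*ε₂) * Mn^a ≤ (1+ε/2) * Mn^a := by
      apply mul_le_mul_of_nonneg_right _ h4
      linarith
    linarith
  have hMna : Mn^a ≤ ((m:ℝ)+1-t)^t * Mn^b := by
    have h1 : Mn^a = Mn^t * Mn^b := by rw [htb, pow_add]
    have h2 : Mn ≤ (m:ℝ)+1-t := by
      rw [hMndef]
      have : (0:ℝ) ≤ b := by positivity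
      linarith
    have h3 : Mn^t ≤ ((m:ℝ)+1-t)^t := pow_le_pow_left₀ (by linarith) h2 t
    have h4 : (0:ℝ) ≤ Mn^b := by positivity
    calc Mn^a = Mn^t * Mn^b := h1
      _ ≤ ((m:ℝ)+1-t)^t * Mn^b := mul_le_mul_of_nonneg_right h3 h4
  -- inequality (A)
  have hbfpos : (0:ℝ) < b.factorial := by linarith
  have hA : (m.choose b : ℝ) * (n:ℝ)^t ≤ (1+ε/2) * ((t.factorial:ℝ) * (a.choose t * N)) := by
    have h1 : (m.choose b : ℝ) ≤ (n:ℝ)^b / b.factorial := by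
      rw [le_div_iff₀ hbfpos]
      calc (m.choose b : ℝ) * b.factorial = (b.factorial:ℝ) * m.choose b := by ring
        _ ≤ (n:ℝ)^b := hmCbR
    have h2 : (m.choose b : ℝ) * (n:ℝ)^t ≤ (n:ℝ)^a / b.factorial := by
      have e1 : (n:ℝ)^b * (n:ℝ)^t = (n:ℝ)^a := by rw [← pow_add, htb, Nat.add_comm]
      calc (m.choose b : ℝ) * (n:ℝ)^t ≤ ((n:ℝ)^b / b.factorial) * (n:ℝ)^t :=
            mul_le_mul_of_nonneg_right h1 (by positivity)
        _ = (n:ℝ)^b * (n:ℝ)^t / b.factorial := by ring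
        _ = (n:ℝ)^a / b.factorial := by rw [e1]
    have h3 : (n:ℝ)^a / b.factorial ≤ (1+ε/2) * (((m:ℝ)+1-t)^t * Mn^b) / b.factorial := by
      apply div_le_div_of_nonneg_right _ hbfpos.le
      calc (n:ℝ)^a ≤ (1+ε/2) * Mn^a := hpowa
        _ ≤ (1+ε/2) * (((m:ℝ)+1-t)^t * Mn^b) := by
            apply mul_le_mul_of_nonneg_left hMna (by linarith)
    have h4 : (1+ε/2) * (((m:ℝ)+1-t)^t * Mn^b) / b.factorial
        ≤ (1+ε/2) * (((t.factorial:ℝ) * b.factorial) * (N * a.choose t)) / b.factorial := by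
      apply div_le_div_of_nonneg_right _ hbfpos.le
      apply mul_le_mul_of_nonneg_left _ (by linarith)
      push_cast at hkeyR ⊢
      exact hkeyR
    have h5 : (1+ε/2) * (((t.factorial:ℝ) * b.factorial) * (N * a.choose t)) / b.factorial
        = (1+ε/2) * ((t.factorial:ℝ) * (a.choose t * N)) := by
      field_simp
    calc (m.choose b : ℝ) * (n:ℝ)^t ≤ (n:ℝ)^a / b.factorial := h2
      _ ≤ (1+ε/2) * (((m:ℝ)+1-t)^t * Mn^b) / b.factorial := h3
      _ ≤ (1+ε/2) * (((t.factorial:ℝ) * b.factorial) * (N * a.choose t)) / b.factorial := h4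
      _ = (1+ε/2) * ((t.factorial:ℝ) * (a.choose t * N)) := h5
  -- inequality (B)
  have hB : (m.choose b : ℝ) * (n:ℝ)^t ≤ (ε/2) * ((t.factorial:ℝ) * (a.choose t * ℓ)) := by
    have h1 : (m.choose b : ℝ) * (n:ℝ)^t ≤ (n:ℝ)^a := by
      have e1 : (n:ℝ)^b * (n:ℝ)^t = (n:ℝ)^a := by rw [← pow_add, htb, Nat.add_comm]
      have h2 : (m.choose b : ℝ) ≤ (n:ℝ)^b := by
        calc (m.choose b : ℝ) = 1 * (m.choose b : ℝ) := (one_mul _).symm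
          _ ≤ (b.factorial:ℝ) * m.choose b :=
            mul_le_mul_of_nonneg_right hbfR (by positivity)
          _ ≤ (n:ℝ)^b := hmCbR
      calc (m.choose b : ℝ) * (n:ℝ)^t ≤ (n:ℝ)^b * (n:ℝ)^t :=
          mul_le_mul_of_nonneg_right h2 (by positivity)
        _ = (n:ℝ)^a := e1
    have hD : (0:ℝ) < ε * t.factorial * a.choose t := by positivity
    have h3 : (2/(ε * t.factorial * a.choose t)) * (n:ℝ)^a ≤ ℓ := by
      have hna : (0:ℝ) ≤ (n:ℝ)^a := by positivity
      have h31 : (2/(ε * t.factorial * a.choose t)) * (n:ℝ)^a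
          ≤ (1 + 2/(ε * t.factorial * a.choose t)) * (n:ℝ)^a :=
        mul_le_mul_of_nonneg_right (by linarith) hna
      linarith [hCl]
    have h4 : (n:ℝ)^a ≤ (ε/2) * ((t.factorial:ℝ) * (a.choose t * ℓ)) := by
      have h5 : (ε/2) * ((t.factorial:ℝ) * (a.choose t * ((2/(ε * t.factorial * a.choose t)) * (n:ℝ)^a)))
          = (n:ℝ)^a := by
        field_simp
      have h6 : (ε/2) * ((t.factorial:ℝ) * (a.choose t * ((2/(ε * t.factorial * a.choose t)) * (n:ℝ)^a)))
          ≤ (ε/2) * ((t.factorial:ℝ) * (a.choose t * ℓ)) := by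
        apply mul_le_mul_of_nonneg_left _ (by positivity)
        apply mul_le_mul_of_nonneg_left _ (by positivity)
        apply mul_le_mul_of_nonneg_left h3 (by positivity)
      linarith
    linarith
  -- final assembly
  have hnt : (0:ℝ) < (n:ℝ)^t := by
    have : (0:ℝ) < n := by linarith
    positivity
  have hgoal_eq : (1 + ε) * ((ℓ:ℝ)^2 / (n:ℝ)^t) * ((t.factorial:ℝ) / 2) * ((a.choose t : ℝ))^2
      = ((1+ε) * (ℓ:ℝ)^2 * (t.factorial:ℝ) * ((a.choose t : ℝ))^2) / (2 * (n:ℝ)^t) := by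
    field_simp
  rw [hgoal_eq, le_div_iff₀ (by positivity)]
  have hmain : (ℓ:ℝ) * (s * (a.choose t * m.choose b)) * (n:ℝ)^t
      ≤ (1+ε) * (ℓ:ℝ)^2 * (t.factorial:ℝ) * ((a.choose t : ℝ))^2 := by
    have hstep1 : (ℓ:ℝ) * (s * (a.choose t * m.choose b)) * (n:ℝ)^t
        = ((a.choose t : ℝ) * ((ℓ:ℝ) * ((m.choose b : ℝ) * (n:ℝ)^t))) * s := by ring
    have hstep2 : ((a.choose t : ℝ) * ((ℓ:ℝ) * ((m.choose b : ℝ) * (n:ℝ)^t))) * (s:ℝ)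
        ≤ ((a.choose t : ℝ) * ((ℓ:ℝ) * ((m.choose b : ℝ) * (n:ℝ)^t))) * ((ℓ:ℝ)/(N:ℝ) + 1) := by
      apply mul_le_mul_of_nonneg_left hsR (by positivity)
    have hstep3 : ((a.choose t : ℝ) * ((ℓ:ℝ) * ((m.choose b : ℝ) * (n:ℝ)^t))) * ((ℓ:ℝ)/(N:ℝ) + 1)
        = (a.choose t : ℝ) * (ℓ:ℝ) * (((m.choose b : ℝ) * (n:ℝ)^t) * ((ℓ:ℝ)/(N:ℝ)))
          + (a.choose t : ℝ) * (ℓ:ℝ) * ((m.choose b : ℝ) * (n:ℝ)^t) := by ring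
    have hterm1 : ((m.choose b : ℝ) * (n:ℝ)^t) * ((ℓ:ℝ)/(N:ℝ))
        ≤ (1+ε/2) * ((t.factorial:ℝ) * ((a.choose t : ℝ) * ℓ)) := by
      have h1 : ((m.choose b : ℝ) * (n:ℝ)^t) * ((ℓ:ℝ)/(N:ℝ))
          ≤ ((1+ε/2) * ((t.factorial:ℝ) * (a.choose t * N))) * ((ℓ:ℝ)/(N:ℝ)) := by
        apply mul_le_mul_of_nonneg_right hA (by positivity)
      have h2 : ((1+ε/2) * ((t.factorial:ℝ) * ((a.choose t:ℝ) * N))) * ((ℓ:ℝ)/(N:ℝ))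
          = (1+ε/2) * ((t.factorial:ℝ) * ((a.choose t : ℝ) * ℓ)) := by
        field_simp
      calc ((m.choose b : ℝ) * (n:ℝ)^t) * ((ℓ:ℝ)/(N:ℝ))
          ≤ ((1+ε/2) * ((t.factorial:ℝ) * ((a.choose t:ℝ) * N))) * ((ℓ:ℝ)/(N:ℝ)) := h1
        _ = (1+ε/2) * ((t.factorial:ℝ) * ((a.choose t : ℝ) * ℓ)) := h2
    have hterm1' : (a.choose t : ℝ) * (ℓ:ℝ) * (((m.choose b : ℝ) * (n:ℝ)^t) * ((ℓ:ℝ)/(N:ℝ)))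
        ≤ (a.choose t : ℝ) * (ℓ:ℝ) * ((1+ε/2) * ((t.factorial:ℝ) * ((a.choose t : ℝ) * ℓ))) := by
      apply mul_le_mul_of_nonneg_left hterm1 (by positivity)
    have hterm2' : (a.choose t : ℝ) * (ℓ:ℝ) * ((m.choose b : ℝ) * (n:ℝ)^t)
        ≤ (a.choose t : ℝ) * (ℓ:ℝ) * ((ε/2) * ((t.factorial:ℝ) * ((a.choose t : ℝ) * ℓ))) := by
      apply mul_le_mul_of_nonneg_left _ (by positivity)
      convert hB using 3
    have hfinal : (a.choose t : ℝ) * (ℓ:ℝ) * ((1+ε/2) * ((t.factorial:ℝ) * ((a.choose t : ℝ) * ℓ)))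
        + (a.choose t : ℝ) * (ℓ:ℝ) * ((ε/2) * ((t.factorial:ℝ) * ((a.choose t : ℝ) * ℓ)))
        = (1+ε) * (ℓ:ℝ)^2 * (t.factorial:ℝ) * ((a.choose t : ℝ))^2 := by ring
    calc (ℓ:ℝ) * (s * (a.choose t * m.choose b)) * (n:ℝ)^t
        = ((a.choose t : ℝ) * ((ℓ:ℝ) * ((m.choose b : ℝ) * (n:ℝ)^t))) * s := hstep1
      _ ≤ ((a.choose t : ℝ) * ((ℓ:ℝ) * ((m.choose b : ℝ) * (n:ℝ)^t))) * ((ℓ:ℝ)/(N:ℝ) + 1) := hstep2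
      _ = (a.choose t : ℝ) * (ℓ:ℝ) * (((m.choose b : ℝ) * (n:ℝ)^t) * ((ℓ:ℝ)/(N:ℝ)))
          + (a.choose t : ℝ) * (ℓ:ℝ) * ((m.choose b : ℝ) * (n:ℝ)^t) := hstep3
      _ ≤ (a.choose t : ℝ) * (ℓ:ℝ) * ((1+ε/2) * ((t.factorial:ℝ) * ((a.choose t : ℝ) * ℓ)))
          + (a.choose t : ℝ) * (ℓ:ℝ) * ((ε/2) * ((t.factorial:ℝ) * ((a.choose t : ℝ) * ℓ))) :=
          add_le_add hterm1' hterm2'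
      _ = (1+ε) * (ℓ:ℝ)^2 * (t.factorial:ℝ) * ((a.choose t : ℝ))^2 := hfinal
  calc (rhoMin n k t ℓ : ℝ) * (2 * (n:ℝ)^t)
      = (2 * (rhoMin n k t ℓ : ℝ)) * (n:ℝ)^t := by ring
    _ ≤ ((ℓ:ℝ) * (s * (a.choose t * m.choose b))) * (n:ℝ)^t := by
        apply mul_le_mul_of_nonneg_right hcombR (by positivity)
    _ ≤ (1+ε) * (ℓ:ℝ)^2 * (t.factorial:ℝ) * ((a.choose t : ℝ))^2 := hmain
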